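/- Let G and G' be finite groups of equal order and let p ∈ B̂(G,G'). Then p is (G,G')-invariant if and only if p = p_G ∘ p ∘ p_{G'}. As a consequence, p_G ∘ p ∘ p_{G'} is (G,G')-invariant for every p ∈ B̂(G,G'). -/

import Mathlib

open scoped BigOperators Classical

/-- A winning correlation for the `(G,G')`-bijection game: nonnegative values,
the outputs sum to one for each pair of inputs, and the value is zero whenever
exactly one of `b = d` and `a = c` holds. -/
def IsWinningCorrelation {G G' : Type*} [Group G] [Group G'] [Fintype G] [Fintype G']
    (p : G → G → G' → G' → ℝ) : Prop :=
  (∀ (b d : G) (a c : G'), 0 ≤ p b d a c) ∧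
  (∀ a c : G', (∑ b : G, ∑ d : G, p b d a c) = 1) ∧
  (∀ (b d : G) (a c : G'), ¬(b = d ↔ a = c) → p b d a c = 0)

/-- Membership in `B̂(G,G')`: a winning correlation whose sum over all pairs of
inputs is `1` for every pair of outputs. -/
def MemBhat {G G' : Type*} [Group G] [Group G'] [Fintype G] [Fintype G']
    (p : G → G → G' → G' → ℝ) : Prop :=
  IsWinningCorrelation p ∧ ∀ b d : G, (∑ a : G', ∑ c : G', p b d a c) = 1

/-- A `(G,G')`-invariant correlation: an element of `B̂(G,G')` whose values depend only
on the quotients `b⁻¹ * d ∈ G` and `a⁻¹ * c ∈ G'`. -/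
def IsInvariantCorrelation {G G' : Type*} [Group G] [Group G'] [Fintype G] [Fintype G']
    (p : G → G → G' → G' → ℝ) : Prop :=
  MemBhat p ∧
  ∀ (b d b' d' : G) (a c a' c' : G'),
    b⁻¹ * d = b'⁻¹ * d' → a⁻¹ * c = a'⁻¹ * c' → p b d a c = p b' d' a' c'

/-- The correlation `p_G`. -/
noncomputable def pUnif (G : Type*) [Group G] [Fintype G] : G → G → G → G → ℝ :=
  fun b d a c => if b⁻¹ * d = a⁻¹ * c then ((Fintype.card G : ℝ))⁻¹ else 0

/-- Composition of correlations. -/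
def corComp {G G' G'' : Type*} [Fintype G']
    (p₁ : G → G → G' → G' → ℝ) (p₂ : G' → G' → G'' → G'' → ℝ) :
    G → G → G'' → G'' → ℝ :=
  fun b d a c => ∑ x : G', ∑ y : G', p₁ b d x y * p₂ x y a c

/-- The correlation matrix `D^p` of a `(G,G')`-invariant correlation `p`:
`D^p_{x,y} = |G| ⬝ p(b,d|a,c)` for any `b,d,a,c` with `b⁻¹d = x`, `a⁻¹c = y`
(here realized with `b = a = e`). -/
noncomputable def corrMatrix {G G' : Type*} [Group G] [Group G'] [Fintype G]
    (p : G → G → G' → G' → ℝ) : Matrix G G' ℝ :=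
  Matrix.of fun x y => (Fintype.card G : ℝ) * p 1 x 1 y

/-- The deterministic correlation `p_π` associated with a bijection `π` from `G'` to `G`. -/
noncomputable def detCor {G G' : Type*} (π : G' ≃ G) : G → G → G' → G' → ℝ :=
  fun b d a c => if b = π a ∧ d = π c then 1 else 0

/-- The permutation matrix `P^π` of a bijection `π` from `G'` to `G`. -/
noncomputable def permMatrix {G G' : Type*} (π : G' ≃ G) : Matrix G G' ℝ :=
  Matrix.of fun x y => if x = π y then 1 else 0

/-- The matrix `D^π`: the correlation matrix of the `(G,G')`-invariant correlation
`p_G ∘ p_π ∘ p_{G'}`. -/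
noncomputable def Dpi {G G' : Type*} [Group G] [Group G'] [Fintype G] [Fintype G']
    (π : G' ≃ G) : Matrix G G' ℝ :=
  corrMatrix (corComp (pUnif G) (corComp (detCor π) (pUnif G')))

set_option linter.unusedSectionVars false

section Aux
variable {G G' : Type*} [Group G] [Group G'] [Fintype G] [Fintype G']

lemma left_unif (r : G → G → G' → G' → ℝ) (b d : G) (a c : G') :
    corComp (pUnif G) r b d a c
      = (Fintype.card G : ℝ)⁻¹ * ∑ x : G, r x (x * (b⁻¹ * d)) a c := by
  simp only [corComp, pUnif, eq_inv_mul_iff_mul_eq, ite_mul, zero_mul,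
    Finset.sum_ite_eq, Finset.mem_univ, if_true, Finset.mul_sum]

lemma right_unif (r : G → G → G' → G' → ℝ) (b d : G) (a c : G') :
    corComp r (pUnif G') b d a c
      = (Fintype.card G' : ℝ)⁻¹ * ∑ u : G', r b d u (u * (a⁻¹ * c)) := by
  simp only [corComp, pUnif, inv_mul_eq_iff_eq_mul, mul_ite, mul_zero,
    Finset.sum_ite_eq', Finset.mem_univ, if_true, Finset.mul_sum]
  exact Finset.sum_congr rfl fun u _ => mul_comm _ _

lemma q_formula (p : G → G → G' → G' → ℝ) (b d : G) (a c : G') :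
    corComp (pUnif G) (corComp p (pUnif G')) b d a c
      = (Fintype.card G : ℝ)⁻¹ * ((Fintype.card G' : ℝ)⁻¹ *
          ∑ x : G, ∑ u : G', p x (x * (b⁻¹ * d)) u (u * (a⁻¹ * c))) := by
  rw [left_unif]
  simp only [right_unif, Finset.mul_sum]

lemma shift_sum_left {H : Type*} [Group H] [Fintype H] {M : Type*} [AddCommMonoid M]
    (f : H → M) (g : H) : ∑ d : H, f (g * d) = ∑ y : H, f y :=
  Fintype.sum_equiv (Equiv.mulLeft g) _ _ (fun _ => rfl)

lemma q_mem (p : G → G → G' → G' → ℝ) (hp : MemBhat p) :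
    MemBhat (corComp (pUnif G) (corComp p (pUnif G'))) := by
  have hG : (Fintype.card G : ℝ) ≠ 0 := Nat.cast_ne_zero.mpr Fintype.card_ne_zero
  have hG' : (Fintype.card G' : ℝ) ≠ 0 := Nat.cast_ne_zero.mpr Fintype.card_ne_zero
  refine ⟨⟨fun b d a c => ?_, fun a c => ?_, fun b d a c h => ?_⟩, fun b d => ?_⟩
  · rw [q_formula]
    exact mul_nonneg (by positivity) (mul_nonneg (by positivity)
      (Finset.sum_nonneg fun x _ => Finset.sum_nonneg fun u _ => hp.1.1 _ _ _ _))
  · -- output sum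
    have key : ∀ b : G,
        ∑ d : G, ∑ x : G, ∑ u : G', p x (x * (b⁻¹ * d)) u (u * (a⁻¹ * c))
          = (Fintype.card G' : ℝ) := by
      intro b
      calc ∑ d : G, ∑ x : G, ∑ u : G', p x (x * (b⁻¹ * d)) u (u * (a⁻¹ * c))
          = ∑ x : G, ∑ d : G, ∑ u : G', p x (x * (b⁻¹ * d)) u (u * (a⁻¹ * c)) :=
            Finset.sum_comm
        _ = ∑ x : G, ∑ y : G, ∑ u : G', p x y u (u * (a⁻¹ * c)) := by
            refine Finset.sum_congr rfl fun x _ => ?_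
            have := shift_sum_left (M := ℝ) (fun y : G => ∑ u : G', p x y u (u * (a⁻¹ * c))) (x * b⁻¹)
            simpa [mul_assoc] using this
        _ = ∑ x : G, ∑ u : G', ∑ y : G, p x y u (u * (a⁻¹ * c)) :=
            Finset.sum_congr rfl fun x _ => Finset.sum_comm
        _ = ∑ u : G', ∑ x : G, ∑ y : G, p x y u (u * (a⁻¹ * c)) :=
            Finset.sum_comm
        _ = ∑ _u : G', (1 : ℝ) :=
            Finset.sum_congr rfl fun u _ => hp.1.2.1 u (u * (a⁻¹ * c))
        _ = (Fintype.card G' : ℝ) := by simp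
    calc ∑ b : G, ∑ d : G, corComp (pUnif G) (corComp p (pUnif G')) b d a c
        = ∑ b : G, (Fintype.card G : ℝ)⁻¹ * ((Fintype.card G' : ℝ)⁻¹ *
            ∑ d : G, ∑ x : G, ∑ u : G', p x (x * (b⁻¹ * d)) u (u * (a⁻¹ * c))) := by
          refine Finset.sum_congr rfl fun b _ => ?_
          simp only [q_formula, Finset.mul_sum]
      _ = ∑ _b : G, (Fintype.card G : ℝ)⁻¹ := by
          refine Finset.sum_congr rfl fun b _ => ?_
          rw [key b, inv_mul_cancel₀ hG', mul_one]
      _ = 1 := by simp [mul_inv_cancel₀ hG]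
  · -- zero condition
    have hterm : ∀ (x : G) (u : G'), p x (x * (b⁻¹ * d)) u (u * (a⁻¹ * c)) = 0 := by
      intro x u
      apply hp.1.2.2
      intro hiff
      simp only [left_eq_mul, inv_mul_eq_one] at hiff
      exact h hiff
    rw [q_formula]
    simp [hterm]
  · -- input sum
    have key : ∀ a : G',
        ∑ c : G', ∑ x : G, ∑ u : G', p x (x * (b⁻¹ * d)) u (u * (a⁻¹ * c))
          = (Fintype.card G : ℝ) := by
      intro a
      calc ∑ c : G', ∑ x : G, ∑ u : G', p x (x * (b⁻¹ * d)) u (u * (a⁻¹ * c))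
          = ∑ x : G, ∑ c : G', ∑ u : G', p x (x * (b⁻¹ * d)) u (u * (a⁻¹ * c)) :=
            Finset.sum_comm
        _ = ∑ x : G, ∑ u : G', ∑ c : G', p x (x * (b⁻¹ * d)) u (u * (a⁻¹ * c)) :=
            Finset.sum_congr rfl fun x _ => Finset.sum_comm
        _ = ∑ x : G, ∑ u : G', ∑ v : G', p x (x * (b⁻¹ * d)) u v := by
            refine Finset.sum_congr rfl fun x _ => Finset.sum_congr rfl fun u _ => ?_
            have := shift_sum_left (M := ℝ) (fun v : G' => p x (x * (b⁻¹ * d)) u v) (u * a⁻¹)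
            simpa [mul_assoc] using this
        _ = ∑ _x : G, (1 : ℝ) :=
            Finset.sum_congr rfl fun x _ => hp.2 x (x * (b⁻¹ * d))
        _ = (Fintype.card G : ℝ) := by simp
    calc ∑ a : G', ∑ c : G', corComp (pUnif G) (corComp p (pUnif G')) b d a c
        = ∑ a : G', (Fintype.card G : ℝ)⁻¹ * ((Fintype.card G' : ℝ)⁻¹ *
            ∑ c : G', ∑ x : G, ∑ u : G', p x (x * (b⁻¹ * d)) u (u * (a⁻¹ * c))) := by
          refine Finset.sum_congr rfl fun a _ => ?_
          simp only [q_formula, Finset.mul_sum]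
      _ = ∑ _a : G', (Fintype.card G : ℝ)⁻¹ * ((Fintype.card G' : ℝ)⁻¹ * (Fintype.card G : ℝ)) := by
          refine Finset.sum_congr rfl fun a _ => ?_
          rw [key a]
      _ = 1 := by
          rw [Finset.sum_const, Finset.card_univ, nsmul_eq_mul]
          field_simp

end Aux


set_option linter.unusedVariables false in
theorem stmt0 {G G' : Type*} [Group G] [Group G'] [Fintype G] [Fintype G']
    (hcard : Fintype.card G = Fintype.card G') :
    (∀ p : G → G → G' → G' → ℝ, MemBhat p →
      (IsInvariantCorrelation p ↔ p = corComp (pUnif G) (corComp p (pUnif G')))) ∧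
    (∀ p : G → G → G' → G' → ℝ, MemBhat p →
      IsInvariantCorrelation (corComp (pUnif G) (corComp p (pUnif G')))) := by
  have hG : (Fintype.card G : ℝ) ≠ 0 := Nat.cast_ne_zero.mpr Fintype.card_ne_zero
  have hG' : (Fintype.card G' : ℝ) ≠ 0 := Nat.cast_ne_zero.mpr Fintype.card_ne_zero
  constructor
  · intro p hp
    constructor
    · rintro ⟨-, hinv⟩
      funext b d a c
      rw [q_formula]
      have ht : ∀ (x : G) (u : G'),
          p x (x * (b⁻¹ * d)) u (u * (a⁻¹ * c)) = p b d a c := fun x u =>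
        hinv x (x * (b⁻¹ * d)) b d u (u * (a⁻¹ * c)) a c (by group) (by group)
      simp only [ht, Finset.sum_const, Finset.card_univ, nsmul_eq_mul]
      field_simp
    · intro hpq
      refine ⟨hp, fun b d b' d' a c a' c' hb ha => ?_⟩
      have e1 := congrFun (congrFun (congrFun (congrFun hpq b) d) a) c
      have e2 := congrFun (congrFun (congrFun (congrFun hpq b') d') a') c'
      rw [e1, e2, q_formula, q_formula, hb, ha]
  · intro p hp
    refine ⟨q_mem p hp, fun b d b' d' a c a' c' hb ha => ?_⟩
    rw [q_formula, q_formula, hb, ha]
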